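/- Let f(x) = Ax + b be an invertible affine map on ℝ², V a one-dimensional subspace, and W = A*V (which is one-dimensional). Then for any Borel set B ⊆ ℝ² and s ≥ 0, ∫ H^s(f(B) ∩ proj_V^{-1}(t)) dλ(t) = ‖A*|_V‖ · ‖A|_{W^⊥}‖^s · ∫ H^s(B ∩ proj_W^{-1}(t)) dλ(t), where λ is Lebesgue measure on ℝ, H^s is s-dimensional Hausdorff measure, and W^⊥ is the orthogonal complement of W. -/

import Mathlib

open MeasureTheory Set ContinuousLinearMap
open scoped ENNReal RealInnerProductSpace

noncomputable section

abbrev E2 := EuclideanSpace ℝ (Fin 2)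

/-- Change of variables for sliced Hausdorff measures under an invertible affine
map `f(x) = Ax + b`.  `V` is a one-dimensional subspace spanned by the unit
vector `v`, `W = A*V` is spanned by the unit vector `w = ‖A* v‖⁻¹ • A* v`, and
`W^⊥` is spanned by the unit vector `u` (so `‖A|_{W^⊥}‖ = ‖A u‖`). Then
`∫ H^s(f(B) ∩ proj_V⁻¹ t) dλ(t) = ‖A*|_V‖ · ‖A|_{W^⊥}‖^s · ∫ H^s(B ∩ proj_W⁻¹ t) dλ(t)`. -/
theorem stmt3 (A : E2 ≃L[ℝ] E2) (b : E2) (v u w : E2)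
    (hv : ‖v‖ = 1) (hu : ‖u‖ = 1)
    (hw : w = (‖adjoint (A : E2 →L[ℝ] E2) v‖)⁻¹ • adjoint (A : E2 →L[ℝ] E2) v)
    (huw : ⟪w, u⟫ = 0)
    (B : Set E2) (hB : MeasurableSet B) (s : ℝ) (hs : 0 ≤ s) :
    ∫⁻ t : ℝ, μH[s] (((fun x => (A : E2 →L[ℝ] E2) x + b) '' B) ∩ {x | ⟪v, x⟫ = t}) ∂volume =
      ENNReal.ofReal ‖adjoint (A : E2 →L[ℝ] E2) v‖ *
        ENNReal.ofReal ‖(A : E2 →L[ℝ] E2) u‖ ^ s *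
        ∫⁻ t : ℝ, μH[s] (B ∩ {x | ⟪w, x⟫ = t}) ∂volume := by
  set T : E2 →L[ℝ] E2 := (A : E2 →L[ℝ] E2) with hT
  set a : ℝ := ‖adjoint T v‖ with haa
  set c : ℝ := ⟪v, b⟫ with hc
  have hv0 : v ≠ 0 := fun h => by simp [h] at hv
  have hu0 : u ≠ 0 := fun h => by simp [h] at hu
  have hTv : adjoint T v ≠ 0 := by
    intro h
    have h1 : ⟪adjoint T v, A.symm v⟫ = ⟪v, T (A.symm v)⟫ :=
      adjoint_inner_left T (A.symm v) v
    rw [h, inner_zero_left] at h1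
    have h2 : T (A.symm v) = v := by simp [hT]
    rw [h2, real_inner_self_eq_norm_mul_norm, hv] at h1
    norm_num at h1
  have ha : 0 < a := norm_pos_iff.mpr hTv
  have hw1 : ‖w‖ = 1 := by
    rw [hw, norm_smul, norm_inv, norm_norm, ← haa]
    exact inv_mul_cancel₀ ha.ne'
  have hw0 : w ≠ 0 := fun h => by simp [h] at hw1
  have haw : adjoint T v = a • w := by
    rw [hw, smul_smul, mul_inv_cancel₀ ha.ne', one_smul]
  have hAu : (0:ℝ) < ‖T u‖ := by
    rw [norm_pos_iff]
    intro h
    exact hu0 (A.injective (show A u = A 0 by simpa [hT] using h))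
  -- span fact
  have hfin : Module.finrank ℝ E2 = 2 := finrank_euclideanSpace_fin
  have hspan : (ℝ ∙ u) = (ℝ ∙ w)ᗮ := by
    apply Submodule.eq_of_le_of_finrank_eq
    · rw [Submodule.span_le, Set.singleton_subset_iff]
      exact Submodule.mem_orthogonal_singleton_iff_inner_right.mpr huw
    · rw [finrank_span_singleton hu0]
      have h1 := Submodule.finrank_add_finrank_orthogonal (K := (ℝ ∙ w))
      rw [finrank_span_singleton hw0, hfin] at h1
      omega
  have hnorm : ∀ z : E2, ⟪w, z⟫ = 0 → ‖T z‖ = ‖T u‖ * ‖z‖ := by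
    intro z hz
    have hz' : z ∈ (ℝ ∙ u) := by
      rw [hspan]
      exact Submodule.mem_orthogonal_singleton_iff_inner_right.mpr hz
    obtain ⟨m, rfl⟩ := Submodule.mem_span_singleton.mp hz'
    rw [_root_.map_smul, norm_smul, norm_smul, hu, mul_one]
    ring
  set r : ℝ≥0∞ := ENNReal.ofReal ‖T u‖ with hr
  have hrnn : r = (‖T u‖₊ : ℝ≥0∞) := by rw [hr, ofReal_norm_eq_enorm]; rfl
  have hnn0 : ‖T u‖₊ ≠ 0 := by
    simpa using hAu.ne'
  have hr0 : r ≠ 0 := by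
    rw [hr]; simpa using hAu
  have hrs0 : r ^ s ≠ 0 :=
    (ENNReal.rpow_pos (lt_of_le_of_ne zero_le (Ne.symm hr0)) ENNReal.ofReal_ne_top).ne'
  have hrst : r ^ s ≠ ⊤ := ENNReal.rpow_ne_top_of_nonneg hs ENNReal.ofReal_ne_top
  -- scaling of Hausdorff measure on slices
  have hscale : ∀ S : Set E2, (∀ x ∈ S, ∀ y ∈ S, ⟪w, x - y⟫ = 0) →
      μH[s] ((fun x => T x + b) '' S) = r ^ s * μH[s] S := by
    intro S hS
    have hd : ∀ x ∈ S, ∀ y ∈ S, dist (T x + b) (T y + b) = ‖T u‖ * dist x y := by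
      intro x hx y hy
      rw [dist_eq_norm, dist_eq_norm]
      have h3 : (T x + b) - (T y + b) = T (x - y) := by rw [map_sub]; abel
      rw [h3, hnorm _ (hS x hx y hy)]
    have hfl : LipschitzOnWith ‖T u‖₊ (fun x => T x + b) S :=
      LipschitzOnWith.of_dist_le_mul fun x hx y hy => by
        rw [coe_nnnorm]; exact (hd x hx y hy).le
    set g : E2 → E2 := fun y => A.symm (y - b) with hg
    have hgf : ∀ x : E2, g (T x + b) = x := by
      intro x; simp [hg, hT]
    have hgl : LipschitzOnWith ‖T u‖₊⁻¹ g ((fun x => T x + b) '' S) := by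
      apply LipschitzOnWith.of_dist_le_mul
      rintro p ⟨x, hx, rfl⟩ q ⟨y, hy, rfl⟩
      rw [hgf, hgf, hd x hx y hy, NNReal.coe_inv, coe_nnnorm, ← mul_assoc,
        inv_mul_cancel₀ hAu.ne', one_mul]
    have himg : g '' ((fun x => T x + b) '' S) = S := by
      rw [Set.image_image]
      simp only [hgf, Set.image_id']
    refine le_antisymm ?_ ?_
    · have h4 := hfl.hausdorffMeasure_image_le hs
      rwa [← hrnn] at h4
    · have h5 := hgl.hausdorffMeasure_image_le hs
      rw [himg, ENNReal.coe_inv hnn0, ← hrnn, ENNReal.inv_rpow] at h5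
      calc r ^ s * μH[s] S ≤ r ^ s * ((r ^ s)⁻¹ * μH[s] ((fun x => T x + b) '' S)) := by
            gcongr
        _ = μH[s] ((fun x => T x + b) '' S) := by
            rw [← mul_assoc, ENNReal.mul_inv_cancel hrs0 hrst, one_mul]
  -- slice identification
  have hslice : ∀ t : ℝ, ((fun x => T x + b) '' B) ∩ {x | ⟪v, x⟫ = t}
      = (fun x => T x + b) '' (B ∩ {x | ⟪w, x⟫ = (t - c) / a}) := by
    intro t
    rw [← Set.image_inter_preimage]
    have hBeq : B ∩ (fun x => T x + b) ⁻¹' {x | ⟪v, x⟫ = t} = B ∩ {x | ⟪w, x⟫ = (t - c) / a} := by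
      ext x
      simp only [Set.mem_inter_iff, Set.mem_preimage, Set.mem_setOf_eq, and_congr_right_iff]
      intro _
      rw [inner_add_right, ← adjoint_inner_left, haw, real_inner_smul_left, ← hc,
        eq_div_iff ha.ne', mul_comm]
      constructor <;> intro h <;> linarith
    rw [hBeq]
  have horth : ∀ d : ℝ, ∀ x ∈ B ∩ {x : E2 | ⟪w, x⟫ = d}, ∀ y ∈ B ∩ {x : E2 | ⟪w, x⟫ = d},
      ⟪w, x - y⟫ = 0 := by
    rintro d x ⟨-, hx⟩ y ⟨-, hy⟩
    rw [inner_sub_right, hx, hy, sub_self]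
  set F : ℝ → ℝ≥0∞ := fun t => μH[s] (B ∩ {x : E2 | ⟪w, x⟫ = t}) with hF
  -- change of variables in the line integral
  set e : ℝ ≃ᵐ ℝ := (affineHomeomorph a c ha.ne').toMeasurableEquiv with he
  have hesymm : ∀ t : ℝ, e.symm t = (t - c) / a := fun t => rfl
  have hmap : Measure.map (⇑e.symm) volume = ENNReal.ofReal a • volume := by
    have hcomp : (⇑e.symm) = (fun y : ℝ => a⁻¹ * y) ∘ (fun y : ℝ => y + (-c)) := by
      funext y
      rw [hesymm]
      simp only [Function.comp_apply]
      rw [div_eq_inv_mul]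
      ring_nf
    rw [hcomp, ← Measure.map_map (measurable_const_mul _) (measurable_add_const _),
      map_add_right_eq_self volume (-c), Real.map_volume_mul_left (inv_ne_zero ha.ne')]
    rw [inv_inv, abs_of_pos ha]
  calc ∫⁻ t : ℝ, μH[s] (((fun x => T x + b) '' B) ∩ {x | ⟪v, x⟫ = t}) ∂volume
      = ∫⁻ t : ℝ, r ^ s * F ((t - c) / a) ∂volume := by
        refine lintegral_congr fun t => ?_
        rw [hslice t, hscale _ (horth _)]
    _ = r ^ s * ∫⁻ t : ℝ, F ((t - c) / a) ∂volume := lintegral_const_mul' _ _ hrst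
    _ = r ^ s * ∫⁻ t : ℝ, F (e.symm t) ∂volume := by
        simp only [hesymm]
    _ = r ^ s * ∫⁻ x : ℝ, F x ∂(Measure.map (⇑e.symm) volume) := by
        rw [lintegral_map_equiv]
    _ = r ^ s * (ENNReal.ofReal a * ∫⁻ t : ℝ, F t ∂volume) := by
        rw [hmap, lintegral_smul_measure, smul_eq_mul]
    _ = ENNReal.ofReal a * r ^ s * ∫⁻ t : ℝ, F t ∂volume := by ring

end
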